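/- Let M ≥ 1 be an integer, P > 0, f > 0, α > 0 real, and let n ≥ 3 be a natural number. Then ∑_{β=2}^{n−1} log((1 + (P/M)·(M−1)/(1 + β f P) + α f P)/(1 + α f P/(1 + P/M))) ≤ (n − 2)·Δ̃ + ((M−1)/(M f))·log(n − 1), where Δ̃ := log((1 + α f P)/(1 + α f P/(1 + P/M))). -/

import Mathlib

open Real Finset

lemma sum_inv_le_log (m : ℕ) (hm : 1 ≤ m) :
    ∑ β ∈ Finset.Icc 2 m, (1 : ℝ) / β ≤ Real.log m := by
  induction m with
  | zero => omega
  | succ m ih =>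
    rcases Nat.lt_or_ge m 1 with h | h
    · interval_cases m
      simp
    · have h2 : 2 ≤ m + 1 := by omega
      rw [Finset.sum_Icc_succ_top h2]
      have hm0 : (0 : ℝ) < m := by exact_mod_cast h
      have hm1 : (0 : ℝ) < (m : ℝ) + 1 := by linarith
      have key : (1 : ℝ) / (m + 1) ≤ Real.log (m + 1) - Real.log m := by
        have hx : (0 : ℝ) < (m : ℝ) / (m + 1) := by positivity
        have := Real.log_le_sub_one_of_pos hx
        rw [Real.log_div (ne_of_gt hm0) (ne_of_gt hm1)] at this
        have : Real.log m - Real.log (m + 1) ≤ (m : ℝ) / (m + 1) - 1 := this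
        have heq : (m : ℝ) / (m + 1) - 1 = -(1 / (m + 1)) := by
          field_simp; ring
        linarith [this, heq ▸ this]
      have := ih h
      push_cast
      linarith

lemma term_le (M : ℕ) (hM : 1 ≤ M) (P f α : ℝ) (hP : 0 < P) (hf : 0 < f) (hα : 0 < α)
    (β : ℕ) (hβ : 2 ≤ β) :
    Real.log ((1 + (P / M) * ((M : ℝ) - 1) / (1 + (β : ℝ) * f * P) + α * f * P) /
        (1 + α * f * P / (1 + P / M)))
      ≤ Real.log ((1 + α * f * P) / (1 + α * f * P / (1 + P / M))) +
        (((M : ℝ) - 1) / ((M : ℝ) * f)) * (1 / (β : ℝ)) := by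
  have hMR : (0 : ℝ) < M := by exact_mod_cast hM
  have hM1 : (1 : ℝ) ≤ M := by exact_mod_cast hM
  have hβR : (0 : ℝ) < β := by positivity
  have hβ2 : (2 : ℝ) ≤ β := by exact_mod_cast hβ
  have hd1 : (0 : ℝ) < 1 + P / M := by positivity
  have hC : (0 : ℝ) < 1 + α * f * P / (1 + P / M) := by positivity
  have hd2 : (0 : ℝ) < 1 + (β : ℝ) * f * P := by positivity
  have hX : (0 : ℝ) ≤ (P / M) * ((M : ℝ) - 1) / (1 + (β : ℝ) * f * P) := by
    apply div_nonneg
    · apply mul_nonneg (le_of_lt (by positivity)); linarith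
    · linarith
  set X := (P / M) * ((M : ℝ) - 1) / (1 + (β : ℝ) * f * P) with hXdef
  have hL : (1 : ℝ) ≤ 1 + α * f * P := by nlinarith [mul_pos (mul_pos hα hf) hP]
  have hL0 : (0 : ℝ) < 1 + α * f * P := by linarith
  have hA : (0 : ℝ) < 1 + X + α * f * P := by linarith
  rw [Real.log_div (ne_of_gt hA) (ne_of_gt hC), Real.log_div (ne_of_gt hL0) (ne_of_gt hC)]
  have key : Real.log (1 + X + α * f * P) ≤ Real.log (1 + α * f * P) + X := by
    have hq : (0 : ℝ) < (1 + X + α * f * P) / (1 + α * f * P) := by positivity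
    have h1 := Real.log_le_sub_one_of_pos hq
    rw [Real.log_div (ne_of_gt hA) (ne_of_gt hL0)] at h1
    have h2 : (1 + X + α * f * P) / (1 + α * f * P) - 1 = X / (1 + α * f * P) := by
      field_simp; ring
    have h3 : X / (1 + α * f * P) ≤ X := div_le_self hX hL
    linarith
  have hXle : X ≤ (((M : ℝ) - 1) / ((M : ℝ) * f)) * (1 / (β : ℝ)) := by
    have hnum : (0 : ℝ) ≤ (P / M) * ((M : ℝ) - 1) := by
      apply mul_nonneg (le_of_lt (by positivity)); linarith
    have hden : (β : ℝ) * f * P ≤ 1 + (β : ℝ) * f * P := by linarith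
    have hdp : (0 : ℝ) < (β : ℝ) * f * P := by positivity
    have h4 : X ≤ (P / M) * ((M : ℝ) - 1) / ((β : ℝ) * f * P) :=
      div_le_div_of_nonneg_left hnum hdp hden |>.trans_eq rfl
    have h5 : (P / M) * ((M : ℝ) - 1) / ((β : ℝ) * f * P)
        = (((M : ℝ) - 1) / ((M : ℝ) * f)) * (1 / (β : ℝ)) := by
      field_simp
    linarith [h5 ▸ h4]
  linarith

/-- main sum estimate in the proof of Theorem 3, Appendix C.
For `M ≥ 1`, `P, f, α > 0` and a natural number `n ≥ 3`,
`∑_{β=2}^{n−1} D(β) ≤ (n−2)·Δ̃ + ((M−1)/(Mf))·log(n−1)`, where `D(β)` is the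
Theorem 1 rate-loss bound and `Δ̃` the invariant INI rate loss. -/
theorem stmt_13 (M : ℕ) (hM : 1 ≤ M) (P f α : ℝ) (hP : 0 < P) (hf : 0 < f) (hα : 0 < α)
    (n : ℕ) (hn : 3 ≤ n) :
    ∑ β ∈ Finset.Icc 2 (n - 1),
        Real.log ((1 + (P / M) * ((M : ℝ) - 1) / (1 + (β : ℝ) * f * P) + α * f * P) /
          (1 + α * f * P / (1 + P / M)))
      ≤ ((n : ℝ) - 2) * Real.log ((1 + α * f * P) / (1 + α * f * P / (1 + P / M))) +
        (((M : ℝ) - 1) / ((M : ℝ) * f)) * Real.log ((n : ℝ) - 1) := by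
  set Δ := Real.log ((1 + α * f * P) / (1 + α * f * P / (1 + P / M))) with hΔ
  set c := ((M : ℝ) - 1) / ((M : ℝ) * f) with hc
  have hc0 : 0 ≤ c := by
    apply div_nonneg
    · have : (1 : ℝ) ≤ M := by exact_mod_cast hM
      linarith
    · positivity
  have step1 : ∑ β ∈ Finset.Icc 2 (n - 1),
        Real.log ((1 + (P / M) * ((M : ℝ) - 1) / (1 + (β : ℝ) * f * P) + α * f * P) /
          (1 + α * f * P / (1 + P / M)))
      ≤ ∑ β ∈ Finset.Icc 2 (n - 1), (Δ + c * (1 / (β : ℝ))) := by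
    apply Finset.sum_le_sum
    intro β hβ
    have hβ2 : 2 ≤ β := (Finset.mem_Icc.mp hβ).1
    exact term_le M hM P f α hP hf hα β hβ2
  have hcard : (Finset.Icc 2 (n - 1)).card = n - 2 := by
    rw [Nat.card_Icc]; omega
  have hsum2 : ∑ β ∈ Finset.Icc 2 (n - 1), (Δ + c * (1 / (β : ℝ)))
      = ((n : ℝ) - 2) * Δ + c * ∑ β ∈ Finset.Icc 2 (n - 1), (1 / (β : ℝ)) := by
    rw [Finset.sum_add_distrib, Finset.sum_const, hcard, ← Finset.mul_sum]
    have : ((n - 2 : ℕ) : ℝ) = (n : ℝ) - 2 := by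
      have : (2 : ℕ) ≤ n := by omega
      push_cast [Nat.cast_sub this]
      ring
    rw [nsmul_eq_mul, this]
  have hinv : ∑ β ∈ Finset.Icc 2 (n - 1), (1 : ℝ) / β ≤ Real.log ((n : ℝ) - 1) := by
    have h1 : 1 ≤ n - 1 := by omega
    have := sum_inv_le_log (n - 1) h1
    have hcast : ((n - 1 : ℕ) : ℝ) = (n : ℝ) - 1 := by
      have : (1 : ℕ) ≤ n := by omega
      push_cast [Nat.cast_sub this]; ring
    rwa [hcast] at this
  calc _ ≤ ((n : ℝ) - 2) * Δ + c * ∑ β ∈ Finset.Icc 2 (n - 1), (1 / (β : ℝ)) := by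
        rw [← hsum2]; exact step1
    _ ≤ ((n : ℝ) - 2) * Δ + c * Real.log ((n : ℝ) - 1) := by
        gcongr
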